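/- Let k be a field, n ≥ 3, and t = 2m+1 odd with m ∈ ℕ. For 0 ≤ k ≤ m and 1 ≤ j ≤ n set g_{k,j} = x_j^{m-k} ∏_{i≠j} x_i^{m+1+k} in k[x_1,…,x_n], and order the pairs (k,j) lexicographically (first by k, then by j). Then for every pair (k,j) ≠ (0,1), the colon ideal ⟨ g_{k',j'} : (k',j') < (k,j) ⟩ : g_{k,j} is generated by a subset of the variables {x_1,…,x_n}. -/

import Mathlib

open MvPolynomial

theorem X_dvd_iff_coeff {σ : Type*} {R : Type*} [CommSemiring R] (i : σ) (p : MvPolynomial σ R) :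
    X i ∣ p ↔ ∀ d : σ →₀ ℕ, d i = 0 → coeff d p = 0 := by
  rw [X_dvd_iff_modMonomial_eq_zero]
  constructor
  · intro h d hd
    have h2 := congrArg (coeff d) h
    rw [coeff_modMonomial_of_not_le _ (by simp [Finsupp.single_le_iff, hd])] at h2
    simpa using h2
  · intro h
    ext d
    by_cases hle : Finsupp.single i 1 ≤ d
    · simp [coeff_modMonomial_of_le _ hle]
    · rw [coeff_modMonomial_of_not_le _ hle, coeff_zero]
      apply h
      by_contra hd
      exact hle (Finsupp.single_le_iff.mpr (by omega))

theorem X_dvd_of_dvd_mul_monomial {σ : Type*} {R : Type*} [CommSemiring R] {i : σ}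
    {dh : σ →₀ ℕ} (hdh : dh i = 0) {r : MvPolynomial σ R}
    (h : X i ∣ r * monomial dh 1) : X i ∣ r := by
  rw [X_dvd_iff_coeff] at h ⊢
  intro d hd
  have h3 := h (d + dh) (by simp [hd, hdh])
  rwa [coeff_mul_monomial, mul_one] at h3

theorem prod_X_pow_eq_monomial' {σ : Type*} {R : Type*} [CommSemiring R] [DecidableEq σ]
    (s : Finset σ) (e : ℕ) :
    (∏ i ∈ s, (X i : MvPolynomial σ R) ^ e) = monomial (∑ i ∈ s, Finsupp.single i e) 1 := by
  induction s using Finset.induction with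
  | empty => simp
  | insert x s hx ih =>
      rw [Finset.prod_insert hx, Finset.sum_insert hx, ih, X_pow_eq_monomial, monomial_mul,
        one_mul]

/-- For `n ≥ 3` and odd `t = 2m+1`, with generators
`g_{k,j} = x_j^{m-k} ∏_{i≠j} x_i^{m+1+k}` ordered lexicographically in `(k,j)`,
every colon ideal `⟨g_{k',j'} : (k',j') < (k,j)⟩ : g_{k,j}` (for `(k,j)` not the
first pair) is generated by a subset of the variables. -/
theorem complete_graph_odd_linear_quotients_colon (k : Type*) [Field k] (n m : ℕ)
    (hn : 3 ≤ n) (c : ℕ) (j : Fin n) (hc : c ≤ m) (hfirst : ¬(c = 0 ∧ j = ⟨0, by omega⟩)) :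
    ∃ S : Set (Fin n),
      Submodule.colon
          (Ideal.span {g : MvPolynomial (Fin n) k |
            ∃ (c' : ℕ) (j' : Fin n), c' ≤ m ∧ (c' < c ∨ (c' = c ∧ j' < j)) ∧
              g = X j' ^ (m - c') * ∏ i ∈ Finset.univ.erase j', X i ^ (m + 1 + c')})
          ((Ideal.span {X j ^ (m - c) * ∏ i ∈ Finset.univ.erase j, X i ^ (m + 1 + c)} :
            Ideal (MvPolynomial (Fin n) k)) : Set (MvPolynomial (Fin n) k)) =
      Ideal.span (X '' S) := by
  classical
  use {j}
  rw [Set.image_singleton]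
  apply le_antisymm
  · intro r hr
    rw [Ideal.mem_colon_span_singleton] at hr
    rw [Ideal.mem_span_singleton]
    -- the span of earlier generators lies in (X j ^ (m - c + 1))
    have hsub : Ideal.span {g : MvPolynomial (Fin n) k |
        ∃ (c' : ℕ) (j' : Fin n), c' ≤ m ∧ (c' < c ∨ (c' = c ∧ j' < j)) ∧
          g = X j' ^ (m - c') * ∏ i ∈ Finset.univ.erase j', X i ^ (m + 1 + c')} ≤
        Ideal.span {(X j : MvPolynomial (Fin n) k) ^ (m - c + 1)} := by
      rw [Ideal.span_le]
      rintro g' ⟨c', j', hc', hlt, rfl⟩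
      rw [SetLike.mem_coe, Ideal.mem_span_singleton]
      by_cases hj : j' = j
      · subst hj
        have hcc : c' < c := by
          rcases hlt with h | ⟨_, h⟩
          · exact h
          · exact absurd h (lt_irrefl _)
        exact Dvd.dvd.mul_right (pow_dvd_pow _ (by omega)) _
      · refine dvd_mul_of_dvd_right ?_ _
        refine dvd_trans (pow_dvd_pow (X j) (by omega : m - c + 1 ≤ m + 1 + c')) ?_
        exact Finset.dvd_prod_of_mem _ (Finset.mem_erase.mpr ⟨Ne.symm hj, Finset.mem_univ _⟩)
    have hdvd : (X j : MvPolynomial (Fin n) k) ^ (m - c + 1) ∣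
        r * (X j ^ (m - c) * ∏ i ∈ Finset.univ.erase j, X i ^ (m + 1 + c)) :=
      Ideal.mem_span_singleton.1 (hsub hr)
    have hre : r * (X j ^ (m - c) * ∏ i ∈ Finset.univ.erase j, X i ^ (m + 1 + c)) =
        X j ^ (m - c) * (r * ∏ i ∈ Finset.univ.erase j, X i ^ (m + 1 + c)) := by ring
    rw [hre, pow_succ] at hdvd
    have hcancel : (X j : MvPolynomial (Fin n) k) ∣
        r * ∏ i ∈ Finset.univ.erase j, X i ^ (m + 1 + c) :=
      (mul_dvd_mul_iff_left (pow_ne_zero (m - c) (X_ne_zero j))).mp hdvd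
    rw [prod_X_pow_eq_monomial'] at hcancel
    refine X_dvd_of_dvd_mul_monomial ?_ hcancel
    rw [Finset.sum_apply']
    refine Finset.sum_eq_zero fun i hi => ?_
    exact Finsupp.single_eq_of_ne (Finset.ne_of_mem_erase hi).symm
  · rw [Ideal.span_le, Set.singleton_subset_iff, SetLike.mem_coe, Ideal.mem_colon_span_singleton]
    rcases c with _ | c''
    · -- c = 0 : use the generator with c' = 0, j' = 0
      have hj0 : j ≠ ⟨0, by omega⟩ := fun h => hfirst ⟨rfl, h⟩
      set j0 : Fin n := ⟨0, by omega⟩ with hj0def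
      have hlt : j0 < j := by
        rcases Fin.lt_or_lt_of_ne hj0 with h | h
        · exact absurd h (by simp [hj0def, Fin.lt_def])
        · exact h
      have key : ∀ a : Fin n, X a * ((X a : MvPolynomial (Fin n) k) ^ (m - 0) *
          ∏ i ∈ Finset.univ.erase a, X i ^ (m + 1 + 0)) =
          ∏ i ∈ Finset.univ, (X i : MvPolynomial (Fin n) k) ^ (m + 1) := by
        intro a
        rw [← mul_assoc, Nat.sub_zero, ← pow_succ', Nat.add_zero]
        exact Finset.mul_prod_erase Finset.univ (fun i => (X i : MvPolynomial (Fin n) k) ^ (m + 1))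
          (Finset.mem_univ a)
      rw [key j, ← key j0]
      exact Ideal.mul_mem_left _ _ (Ideal.subset_span ⟨0, j0, Nat.zero_le _,
        Or.inr ⟨rfl, hlt⟩, rfl⟩)
    · -- c = c'' + 1 : use the generator with c' = c'', j' = j
      have key : X j * ((X j : MvPolynomial (Fin n) k) ^ (m - (c'' + 1)) *
          ∏ i ∈ Finset.univ.erase j, X i ^ (m + 1 + (c'' + 1))) =
          (∏ i ∈ Finset.univ.erase j, X i) *
            (X j ^ (m - c'') * ∏ i ∈ Finset.univ.erase j, X i ^ (m + 1 + c'')) := by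
        have e1 : m - c'' = m - (c'' + 1) + 1 := by omega
        have e2 : m + 1 + (c'' + 1) = (m + 1 + c'') + 1 := by omega
        rw [e1, e2]
        simp only [pow_succ, Finset.prod_mul_distrib]
        ring
      rw [key]
      exact Ideal.mul_mem_left _ _ (Ideal.subset_span ⟨c'', j, by omega,
        Or.inl (Nat.lt_succ_self _), rfl⟩)
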